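/- For any vertex u of a graph G, γ_g(G|u) ≥ γ_g(G) − 2. Moreover, if G is a no-minus graph, then γ_g(G|u) ≥ γ_g(G) − 1. -/
import Mathlib


open Finset

namespace DomGame

open scoped Classical

noncomputable section

variable {V : Type*}

/-- The closed neighborhood of `x` in `G`, as a `Finset`. -/
def closedNbr (G : SimpleGraph V) [Fintype V] (x : V) : Finset V :=
  Finset.univ.filter (fun y => y = x ∨ G.Adj x y)

lemma card_compl_lt (G : SimpleGraph V) [Fintype V] {S : Finset V} {x : V}
    (h : ¬ closedNbr G x ⊆ S) :
    (Finset.univ \ (S ∪ closedNbr G x)).card < (Finset.univ \ S).card := by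
  obtain ⟨v, hvN, hvS⟩ := Finset.not_subset.mp h
  apply Finset.card_lt_card
  have hsub : Finset.univ \ (S ∪ closedNbr G x) ⊆ Finset.univ \ S := by
    intro y hy
    simp only [Finset.mem_sdiff, Finset.mem_univ, Finset.mem_union, true_and, not_or] at hy ⊢
    exact hy.1
  exact (Finset.ssubset_iff_of_subset hsub).mpr ⟨v, by simp [hvS], by simp [hvN]⟩

/-- The value of the (partially dominated) domination game on `G|S`, with
`dom = true` meaning Dominator moves next, `dom = false` meaning Staller moves next.
A legal move is a vertex whose closed neighborhood contains a yet undominated vertex;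
Dominator minimizes, Staller maximizes the total number of moves. -/
def gameVal (G : SimpleGraph V) [Fintype V] (dom : Bool) (S : Finset V) : ℕ :=
  let moves := Finset.univ.filter (fun x => ¬ closedNbr G x ⊆ S)
  if h : moves.Nonempty then
    if dom then
      moves.attach.inf' (by simpa using h)
        (fun x => 1 + gameVal G false (S ∪ closedNbr G x.1))
    else
      moves.attach.sup' (by simpa using h)
        (fun x => 1 + gameVal G true (S ∪ closedNbr G x.1))
  else 0
termination_by (Finset.univ \ S).card
decreasing_by
  · exact card_compl_lt G (by simpa using (Finset.mem_filter.mp x.2).2)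
  · exact card_compl_lt G (by simpa using (Finset.mem_filter.mp x.2).2)

/-- The D-game domination number `γ_g(G)`. -/
def gammaD (G : SimpleGraph V) [Fintype V] : ℕ := gameVal G true ∅

/-- The S-game domination number `γ_g'(G)`. -/
def gammaS (G : SimpleGraph V) [Fintype V] : ℕ := gameVal G false ∅

/-- Value of the Staller-pass domination game on `G|S`: Staller may skip
(at most) one move during the game; the skipped turn is not counted.
`dom` tells whose turn it is, `canPass` whether Staller's pass is still available. -/
def spVal (G : SimpleGraph V) [Fintype V] (dom : Bool) (canPass : Bool) (S : Finset V) : ℕ :=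
  let moves := Finset.univ.filter (fun x => ¬ closedNbr G x ⊆ S)
  if h : moves.Nonempty then
    if dom then
      moves.attach.inf' (by simpa using h)
        (fun x => 1 + spVal G false canPass (S ∪ closedNbr G x.1))
    else
      if hc : canPass then
        max (moves.attach.sup' (by simpa using h)
              (fun x => 1 + spVal G true canPass (S ∪ closedNbr G x.1)))
            (spVal G true false S)
      else
        moves.attach.sup' (by simpa using h)
          (fun x => 1 + spVal G true canPass (S ∪ closedNbr G x.1))
  else 0
termination_by ((Finset.univ \ S).card, if canPass then 1 else 0)
decreasing_by
  · exact Prod.Lex.left _ _ (card_compl_lt G (by simpa using (Finset.mem_filter.mp x.2).2))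
  · exact Prod.Lex.left _ _ (card_compl_lt G (by simpa using (Finset.mem_filter.mp x.2).2))
  · simp only [hc, if_true]
    exact Prod.Lex.right _ (by norm_num)
  · exact Prod.Lex.left _ _ (card_compl_lt G (by simpa using (Finset.mem_filter.mp x.2).2))

/-- Value of the Dominator-pass domination game on `G|S`: Dominator may skip
(at most) one move during the game; the skipped turn is not counted. -/
def dpVal (G : SimpleGraph V) [Fintype V] (dom : Bool) (canPass : Bool) (S : Finset V) : ℕ :=
  let moves := Finset.univ.filter (fun x => ¬ closedNbr G x ⊆ S)
  if h : moves.Nonempty then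
    if dom then
      if hc : canPass then
        min (moves.attach.inf' (by simpa using h)
              (fun x => 1 + dpVal G false canPass (S ∪ closedNbr G x.1)))
            (dpVal G false false S)
      else
        moves.attach.inf' (by simpa using h)
          (fun x => 1 + dpVal G false canPass (S ∪ closedNbr G x.1))
    else
      moves.attach.sup' (by simpa using h)
        (fun x => 1 + dpVal G true canPass (S ∪ closedNbr G x.1))
  else 0
termination_by ((Finset.univ \ S).card, if canPass then 1 else 0)
decreasing_by
  · exact Prod.Lex.left _ _ (card_compl_lt G (by simpa using (Finset.mem_filter.mp x.2).2))
  · simp only [hc, if_true]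
    exact Prod.Lex.right _ (by norm_num)
  · exact Prod.Lex.left _ _ (card_compl_lt G (by simpa using (Finset.mem_filter.mp x.2).2))
  · exact Prod.Lex.left _ _ (card_compl_lt G (by simpa using (Finset.mem_filter.mp x.2).2))

/-- The graph `G_{uv}`: obtained from `G - uv` by adding two new vertices
`u' = Sum.inr false` and `v' = Sum.inr true` together with the edges `u v'` and `v u'`. -/
def cutGraph (G : SimpleGraph V) (u v : V) : SimpleGraph (V ⊕ Bool) :=
  SimpleGraph.fromRel (fun x y =>
    match x, y with
    | Sum.inl a, Sum.inl b => G.Adj a b ∧ ¬ (a = u ∧ b = v) ∧ ¬ (a = v ∧ b = u)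
    | Sum.inl a, Sum.inr b => (b = false ∧ a = v) ∨ (b = true ∧ a = u)
    | _, _ => False)

/-- The set of vertices of `G_{uv}` declared dominated, given that `B ⊆ V(G)` is
declared dominated: `B` together with the two new vertices `u'` and `v'`. -/
def cutDom [DecidableEq V] (B : Finset V) : Finset (V ⊕ Bool) :=
  B.image Sum.inl ∪ {Sum.inr false, Sum.inr true}

/-- Disjoint union of two simple graphs. -/
def disjUnion {α β : Type*} (G : SimpleGraph α) (H : SimpleGraph β) :
    SimpleGraph (α ⊕ β) :=
  SimpleGraph.fromRel (fun x y =>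
    match x, y with
    | Sum.inl a, Sum.inl b => G.Adj a b
    | Sum.inr a, Sum.inr b => H.Adj a b
    | _, _ => False)

/-- The disjoint union of `k` paths, the `i`-th on `size i` vertices
(consecutive vertices of each `Fin (size i)` being adjacent). -/
def sigmaPathGraph (k : ℕ) (size : Fin k → ℕ) :
    SimpleGraph (Σ i : Fin k, Fin (size i)) :=
  SimpleGraph.fromRel (fun x y => x.1 = y.1 ∧ x.2.val + 1 = y.2.val)

/-- Vertex set of the three-legged spider `T_{p,q,r}`:
the center together with three legs on `4p`, `4q` and `4r` vertices. -/
abbrev SpiderV (p q r : ℕ) := Unit ⊕ (Fin (4*p) ⊕ (Fin (4*q) ⊕ Fin (4*r)))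

/-- The three-legged spider `T_{p,q,r}`, obtained from paths `P_{4p+1}`, `P_{4q+1}`,
`P_{4r+1}` by identifying one end-vertex of each into the center. In each leg,
vertex `0` is adjacent to the center, and vertices `i`, `i+1` are adjacent. -/
def spider (p q r : ℕ) : SimpleGraph (SpiderV p q r) :=
  SimpleGraph.fromRel (fun x y =>
    match x, y with
    | Sum.inl _, Sum.inr (Sum.inl i) => i.val = 0
    | Sum.inl _, Sum.inr (Sum.inr (Sum.inl i)) => i.val = 0
    | Sum.inl _, Sum.inr (Sum.inr (Sum.inr i)) => i.val = 0
    | Sum.inr (Sum.inl i), Sum.inr (Sum.inl j) => i.val + 1 = j.val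
    | Sum.inr (Sum.inr (Sum.inl i)), Sum.inr (Sum.inr (Sum.inl j)) => i.val + 1 = j.val
    | Sum.inr (Sum.inr (Sum.inr i)), Sum.inr (Sum.inr (Sum.inr j)) => i.val + 1 = j.val
    | _, _ => False)

/-- The weight `w(P'_{4q+r}) = w(P''_{4q+r}) = 2q + c_r` with
`c_0 = 0`, `c_1 = 1`, `c_2 = 3/2`, `c_3 = 7/4`, as a function of `n = 4q + r`. -/
def pathWeight (n : ℕ) : ℚ :=
  2 * (n / 4 : ℕ) +
    (if n % 4 = 0 then 0 else if n % 4 = 1 then 1 else if n % 4 = 2 then 3/2 else 7/4)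


set_option linter.unusedSectionVars false

variable [Fintype V] {G : SimpleGraph V} {S : Finset V}

lemma gameVal_eq (G : SimpleGraph V) (dom : Bool) (S : Finset V) :
    gameVal G dom S =
      if h : (Finset.univ.filter (fun x => ¬ closedNbr G x ⊆ S)).Nonempty then
        if dom then
          (Finset.univ.filter (fun x => ¬ closedNbr G x ⊆ S)).attach.inf' (by simpa using h)
            (fun x => 1 + gameVal G false (S ∪ closedNbr G x.1))
        else
          (Finset.univ.filter (fun x => ¬ closedNbr G x ⊆ S)).attach.sup' (by simpa using h)
            (fun x => 1 + gameVal G true (S ∪ closedNbr G x.1))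
      else 0 := by
  rw [gameVal]


lemma spVal_eq (G : SimpleGraph V) (dom c : Bool) (S : Finset V) :
    spVal G dom c S =
      if h : (Finset.univ.filter (fun x => ¬ closedNbr G x ⊆ S)).Nonempty then
        if dom then
          (Finset.univ.filter (fun x => ¬ closedNbr G x ⊆ S)).attach.inf' (by simpa using h)
            (fun x => 1 + spVal G false c (S ∪ closedNbr G x.1))
        else
          if hc : c then
            max ((Finset.univ.filter (fun x => ¬ closedNbr G x ⊆ S)).attach.sup'
                  (by simpa using h)
                  (fun x => 1 + spVal G true c (S ∪ closedNbr G x.1)))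
                (spVal G true false S)
          else
            (Finset.univ.filter (fun x => ¬ closedNbr G x ⊆ S)).attach.sup' (by simpa using h)
              (fun x => 1 + spVal G true c (S ∪ closedNbr G x.1))
      else 0 := by
  rw [spVal]

lemma gameVal_zero (dom : Bool)
    (h : ¬ (Finset.univ.filter (fun x => ¬ closedNbr G x ⊆ S)).Nonempty) :
    gameVal G dom S = 0 := by
  rw [gameVal_eq G dom S, dif_neg h]

lemma spVal_zero (dom c : Bool)
    (h : ¬ (Finset.univ.filter (fun x => ¬ closedNbr G x ⊆ S)).Nonempty) :
    spVal G dom c S = 0 := by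
  rw [spVal_eq G dom c S, dif_neg h]

lemma moves_nonempty {x : V} (hx : ¬ closedNbr G x ⊆ S) :
    (Finset.univ.filter (fun x => ¬ closedNbr G x ⊆ S)).Nonempty :=
  ⟨x, Finset.mem_filter.mpr ⟨Finset.mem_univ x, hx⟩⟩

lemma gameVal_true_le {x : V} (hx : ¬ closedNbr G x ⊆ S) :
    gameVal G true S ≤ 1 + gameVal G false (S ∪ closedNbr G x) := by
  rw [gameVal_eq G true S, dif_pos (moves_nonempty hx), if_pos rfl]
  have hmem : (⟨x, Finset.mem_filter.mpr ⟨Finset.mem_univ x, hx⟩⟩ :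
      {y // y ∈ Finset.univ.filter (fun z => ¬ closedNbr G z ⊆ S)}) ∈
      (Finset.univ.filter (fun z => ¬ closedNbr G z ⊆ S)).attach := Finset.mem_attach _ _
  exact Finset.inf'_le _ hmem

lemma le_gameVal_false {x : V} (hx : ¬ closedNbr G x ⊆ S) :
    1 + gameVal G true (S ∪ closedNbr G x) ≤ gameVal G false S := by
  rw [gameVal_eq G false S, dif_pos (moves_nonempty hx), if_neg (by simp)]
  have hmem : (⟨x, Finset.mem_filter.mpr ⟨Finset.mem_univ x, hx⟩⟩ :
      {y // y ∈ Finset.univ.filter (fun z => ¬ closedNbr G z ⊆ S)}) ∈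
      (Finset.univ.filter (fun z => ¬ closedNbr G z ⊆ S)).attach := Finset.mem_attach _ _
  exact Finset.le_sup' (fun y => 1 + gameVal G true (S ∪ closedNbr G y.1)) hmem

lemma gameVal_true_exists
    (h : (Finset.univ.filter (fun x => ¬ closedNbr G x ⊆ S)).Nonempty) :
    ∃ x, ¬ closedNbr G x ⊆ S ∧
      gameVal G true S = 1 + gameVal G false (S ∪ closedNbr G x) := by
  rw [gameVal_eq G true S, dif_pos h, if_pos rfl]
  have hatt : (Finset.univ.filter (fun x => ¬ closedNbr G x ⊆ S)).attach.Nonempty := by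
    simpa using h
  obtain ⟨⟨x, hx⟩, -, hEq⟩ := Finset.exists_mem_eq_inf' hatt
    (fun x => 1 + gameVal G false (S ∪ closedNbr G x.1))
  exact ⟨x, (Finset.mem_filter.mp hx).2, hEq⟩

lemma gameVal_false_exists
    (h : (Finset.univ.filter (fun x => ¬ closedNbr G x ⊆ S)).Nonempty) :
    ∃ x, ¬ closedNbr G x ⊆ S ∧
      gameVal G false S = 1 + gameVal G true (S ∪ closedNbr G x) := by
  rw [gameVal_eq G false S, dif_pos h, if_neg (by simp)]
  have hatt : (Finset.univ.filter (fun x => ¬ closedNbr G x ⊆ S)).attach.Nonempty := by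
    simpa using h
  obtain ⟨⟨x, hx⟩, -, hEq⟩ := Finset.exists_mem_eq_sup' hatt
    (fun x => 1 + gameVal G true (S ∪ closedNbr G x.1))
  exact ⟨x, (Finset.mem_filter.mp hx).2, hEq⟩

lemma spVal_true_le (c : Bool) {x : V} (hx : ¬ closedNbr G x ⊆ S) :
    spVal G true c S ≤ 1 + spVal G false c (S ∪ closedNbr G x) := by
  rw [spVal_eq G true c S, dif_pos (moves_nonempty hx), if_pos rfl]
  have hmem : (⟨x, Finset.mem_filter.mpr ⟨Finset.mem_univ x, hx⟩⟩ :
      {y // y ∈ Finset.univ.filter (fun z => ¬ closedNbr G z ⊆ S)}) ∈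
      (Finset.univ.filter (fun z => ¬ closedNbr G z ⊆ S)).attach := Finset.mem_attach _ _
  exact Finset.inf'_le _ hmem

lemma spVal_true_exists (c : Bool)
    (h : (Finset.univ.filter (fun x => ¬ closedNbr G x ⊆ S)).Nonempty) :
    ∃ x, ¬ closedNbr G x ⊆ S ∧
      spVal G true c S = 1 + spVal G false c (S ∪ closedNbr G x) := by
  rw [spVal_eq G true c S, dif_pos h, if_pos rfl]
  have hatt : (Finset.univ.filter (fun x => ¬ closedNbr G x ⊆ S)).attach.Nonempty := by
    simpa using h
  obtain ⟨⟨x, hx⟩, -, hEq⟩ := Finset.exists_mem_eq_inf' hatt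
    (fun x => 1 + spVal G false c (S ∪ closedNbr G x.1))
  exact ⟨x, (Finset.mem_filter.mp hx).2, hEq⟩

lemma le_spVal_false (c : Bool) {x : V} (hx : ¬ closedNbr G x ⊆ S) :
    1 + spVal G true c (S ∪ closedNbr G x) ≤ spVal G false c S := by
  rw [spVal_eq G false c S, dif_pos (moves_nonempty hx), if_neg (by simp)]
  cases c with
  | false =>
      rw [dif_neg (by simp)]
      have hmem : (⟨x, Finset.mem_filter.mpr ⟨Finset.mem_univ x, hx⟩⟩ :
          {y // y ∈ Finset.univ.filter (fun z => ¬ closedNbr G z ⊆ S)}) ∈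
          (Finset.univ.filter (fun z => ¬ closedNbr G z ⊆ S)).attach := Finset.mem_attach _ _
      exact Finset.le_sup' (fun y => 1 + spVal G true false (S ∪ closedNbr G y.1)) hmem
  | true =>
      rw [dif_pos rfl]
      have hmem : (⟨x, Finset.mem_filter.mpr ⟨Finset.mem_univ x, hx⟩⟩ :
          {y // y ∈ Finset.univ.filter (fun z => ¬ closedNbr G z ⊆ S)}) ∈
          (Finset.univ.filter (fun z => ¬ closedNbr G z ⊆ S)).attach := Finset.mem_attach _ _
      exact le_trans
        (Finset.le_sup' (fun y => 1 + spVal G true true (S ∪ closedNbr G y.1)) hmem)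
        (le_max_left _ _)

lemma le_spVal_false_pass
    (h : (Finset.univ.filter (fun x => ¬ closedNbr G x ⊆ S)).Nonempty) :
    spVal G true false S ≤ spVal G false true S := by
  rw [spVal_eq G false true, dif_pos h, if_neg (by simp), dif_pos rfl]
  exact le_max_right _ _

lemma spVal_false_true_le {b : ℕ}
    (h1 : ∀ x, ¬ closedNbr G x ⊆ S → 1 + spVal G true true (S ∪ closedNbr G x) ≤ b)
    (h2 : spVal G true false S ≤ b) :
    spVal G false true S ≤ b := by
  rw [spVal_eq G false true S]
  split
  · rw [if_neg (by simp), dif_pos rfl]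
    refine max_le (Finset.sup'_le _ _ ?_) h2
    rintro ⟨x, hx⟩ -
    exact h1 x (Finset.mem_filter.mp hx).2
  · exact Nat.zero_le _

lemma no_moves_iff :
    ¬ (Finset.univ.filter (fun x => ¬ closedNbr G x ⊆ S)).Nonempty ↔
      ∀ x, closedNbr G x ⊆ S := by
  simp [Finset.filter_nonempty_iff]

lemma spVal_pass_eq (G : SimpleGraph V) : ∀ (n : ℕ) (S : Finset V),
    (Finset.univ \ S).card = n → ∀ dom, spVal G dom false S = gameVal G dom S := by
  intro n
  induction n using Nat.strong_induction_on with
  | _ n ih =>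
    intro S hn dom
    rw [spVal_eq G dom false S, gameVal_eq G dom S]
    by_cases h : (Finset.univ.filter (fun x => ¬ closedNbr G x ⊆ S)).Nonempty
    · have key : ∀ (x : {y // y ∈ Finset.univ.filter (fun z => ¬ closedNbr G z ⊆ S)}) (d : Bool),
          spVal G d false (S ∪ closedNbr G x.1) = gameVal G d (S ∪ closedNbr G x.1) := by
        intro x d
        exact ih _ (hn ▸ card_compl_lt G (Finset.mem_filter.mp x.2).2) _ rfl d
      rw [dif_pos h, dif_pos h]
      cases dom with
      | true =>
        rw [if_pos rfl, if_pos rfl]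
        exact Finset.inf'_congr (by simpa using h) rfl (fun x _ => by rw [key x false])
      | false =>
        rw [if_neg (by simp), if_neg (by simp), dif_neg (by simp)]
        exact Finset.sup'_congr (by simpa using h) rfl (fun x _ => by rw [key x true])
    · rw [dif_neg h, dif_neg h]

lemma main_aux (G : SimpleGraph V) : ∀ (n : ℕ) (S : Finset V), (Finset.univ \ S).card = n →
    (∀ T, S ⊆ T → gameVal G true T ≤ gameVal G true S) ∧
    (∀ T, S ⊆ T → gameVal G false T ≤ gameVal G false S) ∧
    gameVal G false S ≤ gameVal G true S + 1 ∧
    gameVal G true S ≤ gameVal G false S + 1 := by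
  intro n
  induction n using Nat.strong_induction_on with
  | _ n ih =>
    intro S hn
    have ih' : ∀ S' : Finset V, (Finset.univ \ S').card < (Finset.univ \ S).card →
        (∀ T, S' ⊆ T → gameVal G true T ≤ gameVal G true S') ∧
        (∀ T, S' ⊆ T → gameVal G false T ≤ gameVal G false S') ∧
        gameVal G false S' ≤ gameVal G true S' + 1 ∧
        gameVal G true S' ≤ gameVal G false S' + 1 :=
      fun S' h => ih _ (hn ▸ h) S' rfl
    have ha : ∀ T, S ⊆ T → gameVal G true T ≤ gameVal G true S := by
      intro T hST
      by_cases hS : (Finset.univ.filter (fun x => ¬ closedNbr G x ⊆ S)).Nonempty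
      · obtain ⟨x, hx, hEq⟩ := gameVal_true_exists hS
        by_cases hxT : closedNbr G x ⊆ T
        · have h1 := (ih' _ (card_compl_lt G hx)).1 T (Finset.union_subset hST hxT)
          have h2 := (ih' _ (card_compl_lt G hx)).2.2.2
          omega
        · have h1 := gameVal_true_le hxT
          have h2 := (ih' _ (card_compl_lt G hx)).2.1 (T ∪ closedNbr G x)
            (Finset.union_subset_union hST (Finset.Subset.refl _))
          omega
      · have hT : ¬ (Finset.univ.filter (fun x => ¬ closedNbr G x ⊆ T)).Nonempty :=
          no_moves_iff.mpr (fun x => ((no_moves_iff.mp hS) x).trans hST)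
        rw [gameVal_zero true hT]
        exact Nat.zero_le _
    have hb : ∀ T, S ⊆ T → gameVal G false T ≤ gameVal G false S := by
      intro T hST
      by_cases hT : (Finset.univ.filter (fun x => ¬ closedNbr G x ⊆ T)).Nonempty
      · obtain ⟨y, hy, hEq⟩ := gameVal_false_exists hT
        have hyS : ¬ closedNbr G y ⊆ S := fun hsub => hy (hsub.trans hST)
        have h1 := (ih' _ (card_compl_lt G hyS)).1 (T ∪ closedNbr G y)
          (Finset.union_subset_union hST (Finset.Subset.refl _))
        have h2 := le_gameVal_false hyS
        omega
      · rw [gameVal_zero false hT]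
        exact Nat.zero_le _
    refine ⟨ha, hb, ?_, ?_⟩
    · by_cases hS : (Finset.univ.filter (fun x => ¬ closedNbr G x ⊆ S)).Nonempty
      · obtain ⟨y, hy, hEq⟩ := gameVal_false_exists hS
        have h1 := ha (S ∪ closedNbr G y) Finset.subset_union_left
        omega
      · rw [gameVal_zero true hS, gameVal_zero false hS]
        omega
    · by_cases hS : (Finset.univ.filter (fun x => ¬ closedNbr G x ⊆ S)).Nonempty
      · obtain ⟨x, hxm⟩ := hS
        have hx : ¬ closedNbr G x ⊆ S := (Finset.mem_filter.mp hxm).2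
        have h1 := gameVal_true_le hx
        have h2 := (ih' _ (card_compl_lt G hx)).2.2.1
        have h3 := le_gameVal_false hx
        omega
      · rw [gameVal_zero true hS, gameVal_zero false hS]
        omega

lemma gameVal_mono (dom : Bool) {T : Finset V} (h : S ⊆ T) :
    gameVal G dom T ≤ gameVal G dom S := by
  cases dom with
  | true => exact (main_aux G _ S rfl).1 T h
  | false => exact (main_aux G _ S rfl).2.1 T h

lemma gameVal_false_le_true : gameVal G false S ≤ gameVal G true S + 1 :=
  (main_aux G _ S rfl).2.2.1

lemma gameVal_true_le_false : gameVal G true S ≤ gameVal G false S + 1 :=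
  (main_aux G _ S rfl).2.2.2

lemma spVal_le_gameVal_add_one (G : SimpleGraph V) : ∀ (n : ℕ) (S : Finset V),
    (Finset.univ \ S).card = n →
    spVal G true true S ≤ gameVal G true S + 1 ∧
    spVal G false true S ≤ gameVal G false S + 1 := by
  intro n
  induction n using Nat.strong_induction_on with
  | _ n ih =>
    intro S hn
    have ih' : ∀ S' : Finset V, (Finset.univ \ S').card < (Finset.univ \ S).card →
        spVal G true true S' ≤ gameVal G true S' + 1 ∧
        spVal G false true S' ≤ gameVal G false S' + 1 :=
      fun S' h => ih _ (hn ▸ h) S' rfl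
    constructor
    · by_cases hS : (Finset.univ.filter (fun x => ¬ closedNbr G x ⊆ S)).Nonempty
      · obtain ⟨x, hx, hEq⟩ := gameVal_true_exists hS
        have h1 := spVal_true_le true hx
        have h2 := (ih' _ (card_compl_lt G hx)).2
        omega
      · rw [spVal_zero true true hS]
        exact Nat.zero_le _
    · refine spVal_false_true_le ?_ ?_
      · intro x hx
        have h1 := (ih' _ (card_compl_lt G hx)).1
        have h2 := le_gameVal_false hx
        omega
      · rw [spVal_pass_eq G _ S rfl true]
        have := gameVal_true_le_false (G := G) (S := S)
        omega

lemma spVal_le_gameVal_of_nominus (G : SimpleGraph V)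
    (NM : ∀ S : Finset V, gameVal G true S ≤ gameVal G false S) :
    ∀ (n : ℕ) (S : Finset V), (Finset.univ \ S).card = n →
    spVal G true true S ≤ gameVal G true S ∧
    spVal G false true S ≤ gameVal G false S := by
  intro n
  induction n using Nat.strong_induction_on with
  | _ n ih =>
    intro S hn
    have ih' : ∀ S' : Finset V, (Finset.univ \ S').card < (Finset.univ \ S).card →
        spVal G true true S' ≤ gameVal G true S' ∧
        spVal G false true S' ≤ gameVal G false S' :=
      fun S' h => ih _ (hn ▸ h) S' rfl
    constructor
    · by_cases hS : (Finset.univ.filter (fun x => ¬ closedNbr G x ⊆ S)).Nonempty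
      · obtain ⟨x, hx, hEq⟩ := gameVal_true_exists hS
        have h1 := spVal_true_le true hx
        have h2 := (ih' _ (card_compl_lt G hx)).2
        omega
      · rw [spVal_zero true true hS]
        exact Nat.zero_le _
    · refine spVal_false_true_le ?_ ?_
      · intro x hx
        have h1 := (ih' _ (card_compl_lt G hx)).1
        have h2 := le_gameVal_false hx
        omega
      · rw [spVal_pass_eq G _ S rfl true]
        exact NM S

lemma union_single_subset {R I : Finset V} {u y : V}
    (hIu : I ⊆ R ∪ {u}) (hNy : closedNbr G y ⊆ I) (hyR : ¬ closedNbr G y ⊆ R) :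
    R ∪ {u} ⊆ R ∪ closedNbr G y := by
  obtain ⟨v, hvN, hvR⟩ := Finset.not_subset.mp hyR
  have hvu : v = u := by
    rcases Finset.mem_union.mp (hIu (hNy hvN)) with h | h
    · exact absurd h hvR
    · simpa using h
  intro z hz
  rcases Finset.mem_union.mp hz with h | h
  · exact Finset.mem_union_left _ h
  · have hzu : z = u := by simpa using h
    subst hzu
    exact Finset.mem_union_right _ (hvu ▸ hvN)

lemma imagination (G : SimpleGraph V) (u : V) : ∀ (n : ℕ) (R I : Finset V),
    (Finset.univ \ R).card = n → R ⊆ I → I ⊆ R ∪ {u} →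
    gameVal G true R ≤ spVal G true true I + 1 ∧
    gameVal G false R ≤ spVal G false true I + 1 := by
  intro n
  induction n using Nat.strong_induction_on with
  | _ n ih =>
    intro R I hn hRI hIu
    have ih' : ∀ R' I' : Finset V, (Finset.univ \ R').card < (Finset.univ \ R).card →
        R' ⊆ I' → I' ⊆ R' ∪ {u} →
        gameVal G true R' ≤ spVal G true true I' + 1 ∧
        gameVal G false R' ≤ spVal G false true I' + 1 :=
      fun R' I' h => ih _ (hn ▸ h) R' I'  rfl
    have hsub2 : ∀ z : V, I ∪ closedNbr G z ⊆ (R ∪ closedNbr G z) ∪ {u} := by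
      intro z y hy
      rcases Finset.mem_union.mp hy with h | h
      · rcases Finset.mem_union.mp (hIu h) with h' | h'
        · exact Finset.mem_union_left _ (Finset.mem_union_left _ h')
        · exact Finset.mem_union_right _ h'
      · exact Finset.mem_union_left _ (Finset.mem_union_right _ h)
    constructor
    · by_cases hR : (Finset.univ.filter (fun x => ¬ closedNbr G x ⊆ R)).Nonempty
      · by_cases hI : (Finset.univ.filter (fun x => ¬ closedNbr G x ⊆ I)).Nonempty
        · obtain ⟨x, hx, hEq⟩ := spVal_true_exists true hI
          have hxR : ¬ closedNbr G x ⊆ R := fun hs => hx (hs.trans hRI)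
          have hIH := (ih' (R ∪ closedNbr G x) (I ∪ closedNbr G x) (card_compl_lt G hxR)
            (Finset.union_subset_union hRI (Finset.Subset.refl _)) (hsub2 x)).2
          have h1 := gameVal_true_le hxR
          omega
        · have hall := no_moves_iff.mp hI
          obtain ⟨y, hym⟩ := hR
          have hy : ¬ closedNbr G y ⊆ R := (Finset.mem_filter.mp hym).2
          have h1 := gameVal_true_le hy
          have hRu : R ∪ {u} ⊆ R ∪ closedNbr G y := union_single_subset hIu (hall y) hy
          have h0 : gameVal G false (R ∪ closedNbr G y) = 0 :=
            gameVal_zero _ (no_moves_iff.mpr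
              (fun z => ((hall z).trans hIu).trans hRu))
          omega
      · rw [gameVal_zero true hR]
        exact Nat.zero_le _
    · by_cases hR : (Finset.univ.filter (fun x => ¬ closedNbr G x ⊆ R)).Nonempty
      · obtain ⟨y, hy, hEq⟩ := gameVal_false_exists hR
        by_cases hyI : closedNbr G y ⊆ I
        · have hRu : R ∪ {u} ⊆ R ∪ closedNbr G y := union_single_subset hIu hyI hy
          have hsub : I ⊆ R ∪ closedNbr G y := hIu.trans hRu
          by_cases hI : (Finset.univ.filter (fun x => ¬ closedNbr G x ⊆ I)).Nonempty
          · have h2 := le_spVal_false_pass hI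
            rw [spVal_pass_eq G _ I rfl true] at h2
            have h3 : gameVal G true (R ∪ closedNbr G y) ≤ gameVal G true I :=
              gameVal_mono true hsub
            omega
          · have hall := no_moves_iff.mp hI
            have h0 : gameVal G true (R ∪ closedNbr G y) = 0 :=
              gameVal_zero _ (no_moves_iff.mpr (fun z => (hall z).trans hsub))
            omega
        · have h1 := le_spVal_false true hyI
          have hIH := (ih' (R ∪ closedNbr G y) (I ∪ closedNbr G y) (card_compl_lt G hy)
            (Finset.union_subset_union hRI (Finset.Subset.refl _)) (hsub2 y)).1
          omega
      · rw [gameVal_zero false hR]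
        exact Nat.zero_le _

/-- For any vertex `u`, `γ_g(G|u) ≥ γ_g(G) − 2`; moreover if `G` is no-minus,
then `γ_g(G|u) ≥ γ_g(G) − 1`. -/
theorem gameVal_dominated_vertex_lower_bound {V : Type*} [Fintype V]
    (G : SimpleGraph V) (u : V) :
    gammaD G ≤ gameVal G true {u} + 2 ∧
    ((∀ S : Finset V, gameVal G true S ≤ gameVal G false S) →
      gammaD G ≤ gameVal G true {u} + 1) := by
  have him := (imagination G u _ ∅ {u} rfl (Finset.empty_subset _) (by simp)).1
  constructor
  · have h3 := (spVal_le_gameVal_add_one G _ ({u} : Finset V) rfl).1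
    rw [gammaD]
    omega
  · intro NM
    have h3 := (spVal_le_gameVal_of_nominus G NM _ ({u} : Finset V) rfl).1
    rw [gammaD]
    omega

end

end DomGame
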